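/- arXiv:1308.3778 — 5 statements merged into one kernel-verified Lean document; each statement's English description precedes it below -/
import Mathlib

section
/- In a finite normal-form game, for every player i and every k, the set NSD_i^k(Γ) is nonempty; in particular, any strategy maximizing the minimum payoff min_{τ ∈ NSD_{-i}^k(Γ)} u_i(·,τ) over NSD_i^k(Γ) survives round k+1 of the deletion process. -/
open Function

section
variable {ι : Type*} [DecidableEq ι] {S : ι → Type*}

noncomputable def minv (u : ι → (∀ j, S j) → ℝ) (i : ι) (T : Set (∀ j, S j)) (σ : S i) : ℝ :=
  sInf ((fun τ => u i (Function.update τ i σ)) '' T)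

noncomputable def maxv (u : ι → (∀ j, S j) → ℝ) (i : ι) (T : Set (∀ j, S j)) (σ : S i) : ℝ :=
  sSup ((fun τ => u i (Function.update τ i σ)) '' T)

/-- `σ'` minimax dominates `σ` for player `i` w.r.t. opponent profile set `T`. -/
def MMDomBy (u : ι → (∀ j, S j) → ℝ) (i : ι) (T : Set (∀ j, S j)) (σ σ' : S i) : Prop :=
  minv u i T σ' > maxv u i T σ

def MMDom (u : ι → (∀ j, S j) → ℝ) (i : ι) (T : Set (∀ j, S j)) (σ : S i) : Prop :=
  ∃ σ' : S i, MMDomBy u i T σ σ'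

/-- Opponent profiles of player `i` compatible with the product set `Z`. -/
def Opp (Z : ∀ j, Set (S j)) (i : ι) : Set (∀ j, S j) := {τ | ∀ j, j ≠ i → τ j ∈ Z j}

/-- Iterated deletion of minimax dominated strategies. -/
noncomputable def NSD (u : ι → (∀ j, S j) → ℝ) : ℕ → ∀ i, Set (S i)
  | 0, _ => Set.univ
  | (k+1), i => {σ ∈ NSD u k i | ¬ MMDom u i (Opp (NSD u k) i) σ}

variable {ι : Type*} [Fintype ι] [DecidableEq ι] {S : ι → Type*}
  [∀ i, Fintype (S i)] [∀ i, Nonempty (S i)]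

lemma nsd_le (u : ι → (∀ j, S j) → ℝ) {m k : ℕ} (h : m ≤ k) (i : ι) :
    NSD u k i ⊆ NSD u m i := by
  induction h with
  | refl => exact subset_rfl
  | @step n h ih => exact fun σ hσ => ih hσ.1

lemma minv_le_maxv (u : ι → (∀ j, S j) → ℝ) (i : ι) {T : Set (∀ j, S j)}
    (hT : T.Nonempty) (σ : S i) : minv u i T σ ≤ maxv u i T σ := by
  have hfin : ((fun τ => u i (Function.update τ i σ)) '' T).Finite :=
    (Set.toFinite T).image _
  exact csInf_le_csSup (hT.image _) hfin.bddBelow hfin.bddAbove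

lemma minv_anti (u : ι → (∀ j, S j) → ℝ) (i : ι) {T T' : Set (∀ j, S j)}
    (hsub : T ⊆ T') (hT : T.Nonempty) (σ : S i) : minv u i T' σ ≤ minv u i T σ := by
  have hfin : ((fun τ => u i (Function.update τ i σ)) '' T').Finite :=
    (Set.toFinite T').image _
  exact csInf_le_csInf hfin.bddBelow (hT.image _) (Set.image_mono hsub)

lemma maxv_mono (u : ι → (∀ j, S j) → ℝ) (i : ι) {T T' : Set (∀ j, S j)}
    (hsub : T ⊆ T') (hT : T.Nonempty) (σ : S i) : maxv u i T σ ≤ maxv u i T' σ := by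
  have hfin : ((fun τ => u i (Function.update τ i σ)) '' T').Finite :=
    (Set.toFinite T').image _
  exact csSup_le_csSup hfin.bddAbove (hT.image _) (Set.image_mono hsub)

lemma maximin_mem (u : ι → (∀ j, S j) → ℝ) (k : ℕ)
    (hne : ∀ j, (NSD u k j).Nonempty) (i : ι) (σ : S i)
    (hmax : ∀ σ', minv u i (Opp (NSD u k) i) σ' ≤ minv u i (Opp (NSD u k) i) σ) :
    σ ∈ NSD u (k+1) i := by
  have hOppk : (Opp (NSD u k) i).Nonempty :=
    ⟨fun j => (hne j).choose, fun j _ => (hne j).choose_spec⟩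
  have hmem : ∀ m, m ≤ k → σ ∈ NSD u m i := by
    intro m hm
    induction m with
    | zero => trivial
    | succ n ih =>
      refine ⟨ih (Nat.le_of_succ_le hm), ?_⟩
      rintro ⟨σ'', hdom⟩
      have hsub : Opp (NSD u k) i ⊆ Opp (NSD u n) i :=
        fun τ hτ j hj => nsd_le u (Nat.le_of_succ_le hm) j (hτ j hj)
      have h1 : minv u i (Opp (NSD u n) i) σ'' ≤ minv u i (Opp (NSD u k) i) σ'' :=
        minv_anti u i hsub hOppk σ''
      have h2 : maxv u i (Opp (NSD u k) i) σ ≤ maxv u i (Opp (NSD u n) i) σ :=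
        maxv_mono u i hsub hOppk σ
      have h3 := minv_le_maxv u i hOppk σ
      have h4 := hmax σ''
      have h5 : minv u i (Opp (NSD u n) i) σ'' > maxv u i (Opp (NSD u n) i) σ := hdom
      linarith
  refine ⟨hmem k le_rfl, ?_⟩
  rintro ⟨σ'', hdom⟩
  have h3 := minv_le_maxv u i hOppk σ
  have h4 := hmax σ''
  have h5 : minv u i (Opp (NSD u k) i) σ'' > maxv u i (Opp (NSD u k) i) σ := hdom
  linarith

lemma nsd_ne (u : ι → (∀ j, S j) → ℝ) : ∀ k (i : ι), (NSD u k i).Nonempty := by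
  intro k
  induction k with
  | zero => intro i; exact ⟨Classical.arbitrary _, trivial⟩
  | succ n ih =>
    intro i
    obtain ⟨σ, hσ⟩ := Finite.exists_max (fun σ : S i => minv u i (Opp (NSD u n) i) σ)
    exact ⟨σ, maximin_mem u n ih i σ hσ⟩

theorem nsd_nonempty_maximin_survives (u : ι → (∀ j, S j) → ℝ) (i : ι) (k : ℕ) :
    (NSD u k i).Nonempty ∧
    ∀ σ ∈ NSD u k i,
      (∀ σ' ∈ NSD u k i,
        minv u i (Opp (NSD u k) i) σ' ≤ minv u i (Opp (NSD u k) i) σ) →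
      σ ∈ NSD u (k+1) i := by
  refine ⟨nsd_ne u k i, ?_⟩
  intro σ hσ hmax
  obtain ⟨σs, hσs⟩ := Finite.exists_max (fun σ' : S i => minv u i (Opp (NSD u k) i) σ')
  have hstar : σs ∈ NSD u (k+1) i := maximin_mem u k (nsd_ne u k) i σs hσs
  have hglob : ∀ σ', minv u i (Opp (NSD u k) i) σ' ≤ minv u i (Opp (NSD u k) i) σ :=
    fun σ' => (hσs σ').trans (hmax σs hstar.1)
  exact maximin_mem u k (nsd_ne u k) i σ hglob

end
end

section
/- In a finite normal-form game there exists K such that NSD^K(Γ) = NSD^{K+1}(Γ), and hence NSD^k(Γ) = NSD^K(Γ) = NSD^∞(Γ) for all k ≥ K, where NSD^∞(Γ) = ⋂_k NSD^k(Γ); moreover NSD^∞(Γ) is nonempty. -/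
open Function

section
variable {ι : Type*} [DecidableEq ι] {S : ι → Type*}

lemma nsd_succ_def (u : ι → (∀ j, S j) → ℝ) (k : ℕ) (i : ι) :
    NSD u (k+1) i = {σ ∈ NSD u k i | ¬ MMDom u i (Opp (NSD u k) i) σ} := rfl

lemma nsd_succ_subset (u : ι → (∀ j, S j) → ℝ) (k : ℕ) (i : ι) :
    NSD u (k+1) i ⊆ NSD u k i := fun _ h => h.1

lemma nsd_anti (u : ι → (∀ j, S j) → ℝ) {m n : ℕ} (h : m ≤ n) (i : ι) :
    NSD u n i ⊆ NSD u m i := by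
  induction n with
  | zero =>
    have : m = 0 := Nat.le_zero.mp h
    subst this; exact subset_rfl
  | succ n ih =>
    rcases Nat.lt_or_ge m (n+1) with h' | h'
    · exact (nsd_succ_subset u n i).trans (ih (Nat.lt_succ_iff.mp h'))
    · have : m = n+1 := le_antisymm h h'
      subst this; exact subset_rfl

lemma nsd_succ_congr (u : ι → (∀ j, S j) → ℝ) {a b : ℕ}
    (h : ∀ i, NSD u a i = NSD u b i) (i : ι) : NSD u (a+1) i = NSD u (b+1) i := by
  have hfun : NSD u a = NSD u b := funext h
  rw [nsd_succ_def, nsd_succ_def, hfun]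

lemma nsd_nonempty {ι : Type*} [Fintype ι] [DecidableEq ι] {S : ι → Type*}
    [∀ i, Fintype (S i)] [∀ i, Nonempty (S i)]
    (u : ι → (∀ j, S j) → ℝ) : ∀ k i, (NSD u k i).Nonempty := by
  intro k
  induction k with
  | zero => intro i; exact Set.univ_nonempty
  | succ k ih =>
    intro i
    -- pick a profile compatible with NSD u k
    have hch : ∀ j, ∃ s : S j, s ∈ NSD u k j := fun j => ih j
    choose τ0 hτ0 using hch
    have hτ0mem : ∀ k' ≤ k, τ0 ∈ Opp (NSD u k') i :=
      fun k' hk' j _ => nsd_anti u hk' j (hτ0 j)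
    -- pick a best response to τ0
    obtain ⟨σ, -, hσmax⟩ :=
      Finset.exists_max_image (Finset.univ : Finset (S i))
        (fun s => u i (Function.update τ0 i s)) Finset.univ_nonempty
    -- σ survives every round up to k+1
    have key : ∀ k' ≤ k + 1, σ ∈ NSD u k' i := by
      intro k' hk'
      induction k' with
      | zero => exact Set.mem_univ σ
      | succ k' ih' =>
        have hk'k : k' ≤ k := Nat.lt_succ_iff.mp hk'
        refine ⟨ih' (Nat.le_of_succ_le hk'), ?_⟩
        rintro ⟨σ', hdom⟩
        set T := Opp (NSD u k') i with hT
        have hτ0T : τ0 ∈ T := hτ0mem k' hk'k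
        have hfin : ∀ s : S i, ((fun τ => u i (Function.update τ i s)) '' T).Finite :=
          fun s => (Set.toFinite T).image _
        have h1 : maxv u i T σ ≥ u i (Function.update τ0 i σ) :=
          le_csSup (hfin σ).bddAbove ⟨τ0, hτ0T, rfl⟩
        have h2 : minv u i T σ' ≤ u i (Function.update τ0 i σ') :=
          csInf_le (hfin σ').bddBelow ⟨τ0, hτ0T, rfl⟩
        have h3 : u i (Function.update τ0 i σ') ≤ u i (Function.update τ0 i σ) :=
          hσmax σ' (Finset.mem_univ σ')
        have : minv u i T σ' ≤ maxv u i T σ := le_trans h2 (le_trans h3 h1)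
        exact absurd hdom (not_lt.mpr this)
    exact ⟨σ, key (k+1) le_rfl⟩

variable {ι : Type*} [Fintype ι] [DecidableEq ι] {S : ι → Type*}
  [∀ i, Fintype (S i)] [∀ i, Nonempty (S i)]

theorem nsd_stabilizes (u : ι → (∀ j, S j) → ℝ) :
    ∃ K : ℕ,
      (∀ i, NSD u (K+1) i = NSD u K i) ∧
      (∀ k, K ≤ k → ∀ i, NSD u k i = NSD u K i) ∧
      (∀ i, NSD u K i = ⋂ k, NSD u k i) ∧
      (∀ i, (⋂ k, NSD u k i).Nonempty) := by
  have hfin : Finite (∀ i, Set (S i)) := inferInstance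
  obtain ⟨m, n, hmn, heq⟩ :=
    Finite.exists_ne_map_eq_of_infinite (fun k : ℕ => NSD u k)
  -- WLOG m < n
  wlog hlt : m < n generalizing m n
  · exact this n m (Ne.symm hmn) heq.symm (by omega)
  refine ⟨m, ?_, ?_, ?_, ?_⟩
  case _ =>
    -- NSD u (m+1) = NSD u m
    intro i
    apply Set.Subset.antisymm (nsd_succ_subset u m i)
    have : NSD u m i = NSD u n i := congrFun heq i
    rw [this]
    exact nsd_anti u hlt i
  all_goals {
    have hstep : ∀ i, NSD u (m+1) i = NSD u m i := by
      intro i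
      apply Set.Subset.antisymm (nsd_succ_subset u m i)
      have : NSD u m i = NSD u n i := congrFun heq i
      rw [this]
      exact nsd_anti u hlt i
    have hall : ∀ k, m ≤ k → ∀ i, NSD u k i = NSD u m i := by
      intro k hk
      induction k with
      | zero =>
        have : m = 0 := Nat.le_zero.mp hk
        subst this; intro i; rfl
      | succ k ih =>
        rcases Nat.lt_or_ge m (k+1) with h' | h'
        · intro i
          have hk' : m ≤ k := Nat.lt_succ_iff.mp h'
          calc NSD u (k+1) i = NSD u (m+1) i := nsd_succ_congr u (ih hk') i
            _ = NSD u m i := hstep i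
        · have : m = k+1 := le_antisymm hk h'
          subst this; intro i; rfl
    have hiInter : ∀ i, NSD u m i = ⋂ k, NSD u k i := by
      intro i
      apply Set.Subset.antisymm
      · apply Set.subset_iInter
        intro k
        rcases Nat.le_total k m with h | h
        · exact nsd_anti u h i
        · rw [hall k h i]
      · exact Set.iInter_subset _ m
    first
    | exact hall
    | exact hiInter
    | { intro i; rw [← hiInter i]; exact nsd_nonempty u m i }
  }

end
end

section
/- In the two-player 'reverse traveler's dilemma' game where each player announces an integer in {1,...,k} (k ≥ 2) and payoffs are u(x,y) = (y + 1/2, y) if x > y, (x, x + 1/2) if y > x, and (x,x) if x = y, exactly the strategy profile (k,k) survives iterated deletion of minimax dominated strategies; more precisely, for 0 ≤ j ≤ k−1, NSD^j consists of all profiles (x,y) with j+1 ≤ x,y ≤ k. -/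
open Function

section
variable {ι : Type*} [DecidableEq ι] {S : ι → Type*}

/-- Reverse traveler's dilemma with announcements 1..k (strategy `a : Fin k` announces `a+1`). -/
noncomputable def rtd (k : ℕ) : Fin 2 → (Fin 2 → Fin k) → ℝ := fun i σ =>
  let x : ℕ := (σ i : ℕ) + 1
  let y : ℕ := (σ (i + 1) : ℕ) + 1
  if x > y then (y : ℝ) + 1/2 else (x : ℝ)

namespace RTDaux

/-- One-opponent payoff: payoff to a player announcing `a+1` against opponent announcing `b+1`. -/
noncomputable def f (k : ℕ) (a b : Fin k) : ℝ :=
  if (b : ℕ) < (a : ℕ) then (b : ℕ) + 1 + 1/2 else (a : ℕ) + 1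

lemma fin2_succ_ne (i : Fin 2) : i + 1 ≠ i := by revert i; decide

lemma fin2_ne : ∀ i j : Fin 2, j ≠ i → j = i + 1 := by decide

lemma rtd_eq (k : ℕ) (i : Fin 2) (σ : Fin k) (τ : Fin 2 → Fin k) :
    rtd k i (Function.update τ i σ) = f k σ (τ (i + 1)) := by
  have h2 : Function.update τ i σ (i + 1) = τ (i + 1) :=
    Function.update_of_ne (fin2_succ_ne i) _ _
  simp only [rtd, f, Function.update_self, h2]
  by_cases h : (τ (i + 1) : ℕ) < (σ : ℕ)
  · rw [if_pos (by omega), if_pos h]; push_cast; ring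
  · rw [if_neg (by omega), if_neg h]; push_cast; ring

lemma image_eq (k : ℕ) (i : Fin 2) (Z : Fin 2 → Set (Fin k)) (σ : Fin k) :
    (fun τ => rtd k i (Function.update τ i σ)) '' (Opp Z i) = f k σ '' (Z (i + 1)) := by
  ext r
  constructor
  · rintro ⟨τ, hτ, rfl⟩
    exact ⟨τ (i + 1), hτ (i + 1) (fin2_succ_ne i), (rtd_eq k i σ τ).symm⟩
  · rintro ⟨b, hb, rfl⟩
    refine ⟨fun _ => b, fun j hj => ?_, rtd_eq k i σ (fun _ => b)⟩
    rw [fin2_ne i j hj]; exact hb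

lemma minv_eq (k : ℕ) (i : Fin 2) (Z : Fin 2 → Set (Fin k)) (σ : Fin k) :
    minv (rtd k) i (Opp Z i) σ = sInf (f k σ '' Z (i + 1)) := by
  rw [minv, image_eq]

lemma maxv_eq (k : ℕ) (i : Fin 2) (Z : Fin 2 → Set (Fin k)) (σ : Fin k) :
    maxv (rtd k) i (Opp Z i) σ = sSup (f k σ '' Z (i + 1)) := by
  rw [maxv, image_eq]

lemma bddB (k : ℕ) (σ : Fin k) (T : Set (Fin k)) : BddBelow (f k σ '' T) :=
  ((Set.toFinite T).image _).bddBelow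

lemma bddA (k : ℕ) (σ : Fin k) (T : Set (Fin k)) : BddAbove (f k σ '' T) :=
  ((Set.toFinite T).image _).bddAbove

/-- The strategy announcing `j+1` minimax dominates the one announcing `j`
w.r.t. opponents announcing at least `j+1`. -/
lemma dom_j (k : ℕ) (j : ℕ) (hj1 : j + 1 < k) (i : Fin 2) :
    MMDomBy (rtd k) i (Opp (fun _ => {b : Fin k | j ≤ (b : ℕ)}) i)
      ⟨j, by omega⟩ ⟨j + 1, hj1⟩ := by
  rw [MMDomBy, minv_eq, maxv_eq]
  have hmax : sSup (f k (⟨j, by omega⟩ : Fin k) '' {b : Fin k | j ≤ (b : ℕ)})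
      ≤ (j : ℝ) + 1 := by
    apply Real.sSup_le
    · rintro x ⟨b, hb, rfl⟩
      simp only [Set.mem_setOf_eq] at hb
      rw [f, if_neg (by simpa using by omega)]
    · positivity
  have hmin : (j : ℝ) + 3/2 ≤
      sInf (f k (⟨j + 1, hj1⟩ : Fin k) '' {b : Fin k | j ≤ (b : ℕ)}) := by
    apply le_csInf
    · exact ⟨_, ⟨⟨j, by omega⟩, by simp, rfl⟩⟩
    · rintro x ⟨b, hb, rfl⟩
      simp only [Set.mem_setOf_eq] at hb
      rw [f]
      by_cases h : (b : ℕ) < j + 1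
      · rw [if_pos (by simpa using h)]
        have : (b : ℕ) = j := by omega
        rw [this]; linarith
      · rw [if_neg (by simpa using h)]
        push_cast; linarith
  calc sSup _ ≤ (j : ℝ) + 1 := hmax
    _ < (j : ℝ) + 3/2 := by norm_num
    _ ≤ _ := hmin

/-- No strategy announcing at least `j+2` is minimax dominated w.r.t. opponents
announcing at least `j+1`. -/
lemma nondom (k : ℕ) (j : ℕ) (hj : j < k) (a : Fin k) (ha : j + 1 ≤ (a : ℕ)) (i : Fin 2) :
    ¬ MMDom (rtd k) i (Opp (fun _ => {b : Fin k | j ≤ (b : ℕ)}) i) a := by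
  rintro ⟨σ', hσ'⟩
  rw [MMDomBy, minv_eq, maxv_eq] at hσ'
  have h1 : sInf (f k σ' '' {b : Fin k | j ≤ (b : ℕ)}) ≤ (j : ℝ) + 3/2 := by
    have hmem : f k σ' ⟨j, hj⟩ ∈ f k σ' '' {b : Fin k | j ≤ (b : ℕ)} :=
      ⟨⟨j, hj⟩, by simp, rfl⟩
    refine le_trans (csInf_le (bddB k σ' _) hmem) ?_
    rw [f]
    by_cases h : ((⟨j, hj⟩ : Fin k) : ℕ) < (σ' : ℕ)
    · rw [if_pos h]; push_cast; linarith
    · rw [if_neg h]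
      simp only [Fin.val_mk] at h
      have : (σ' : ℕ) ≤ j := by omega
      have := (Nat.cast_le (α := ℝ)).2 this
      push_cast at this ⊢; linarith
  have h2 : (a : ℝ) + 1 ≤ sSup (f k a '' {b : Fin k | j ≤ (b : ℕ)}) := by
    have hmem : f k a a ∈ f k a '' {b : Fin k | j ≤ (b : ℕ)} :=
      ⟨a, by simp; omega, rfl⟩
    refine le_trans ?_ (le_csSup (bddA k a _) hmem)
    rw [f, if_neg (lt_irrefl _)]
  have h3 : (j : ℝ) + 2 ≤ (a : ℝ) + 1 := by
    have := (Nat.cast_le (α := ℝ)).2 ha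
    push_cast at this; linarith
  linarith [hσ']

/-- The top strategy is not minimax dominated w.r.t. the singleton top set. -/
lemma nondom_top (k : ℕ) (hk : 2 ≤ k) (a : Fin k) (ha : (a : ℕ) = k - 1) (i : Fin 2) :
    ¬ MMDom (rtd k) i (Opp (fun _ => {b : Fin k | (b : ℕ) = k - 1}) i) a := by
  rintro ⟨σ', hσ'⟩
  rw [MMDomBy, minv_eq, maxv_eq] at hσ'
  have h1 : sInf (f k σ' '' {b : Fin k | (b : ℕ) = k - 1}) ≤ (σ' : ℝ) + 1 := by
    have hmem : f k σ' a ∈ f k σ' '' {b : Fin k | (b : ℕ) = k - 1} := ⟨a, ha, rfl⟩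
    refine le_trans (csInf_le (bddB k σ' _) hmem) ?_
    rw [f, if_neg (by have := σ'.isLt; omega)]
  have h2 : (a : ℝ) + 1 ≤ sSup (f k a '' {b : Fin k | (b : ℕ) = k - 1}) := by
    have hmem : f k a a ∈ f k a '' {b : Fin k | (b : ℕ) = k - 1} := ⟨a, ha, rfl⟩
    refine le_trans ?_ (le_csSup (bddA k a _) hmem)
    rw [f, if_neg (lt_irrefl _)]
  have h3 : (σ' : ℝ) ≤ (a : ℝ) := by
    have : (σ' : ℕ) ≤ (a : ℕ) := by have := σ'.isLt; omega
    exact_mod_cast this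
  linarith [hσ']

lemma main1 (k : ℕ) (hk : 2 ≤ k) :
    ∀ j : ℕ, j ≤ k - 1 → ∀ i : Fin 2,
      NSD (rtd k) j i = {a : Fin k | j ≤ (a : ℕ)} := by
  intro j
  induction j with
  | zero => intro _ i; simp [NSD]
  | succ j IH =>
    intro hj i
    have hjk : j + 1 < k := by omega
    have hZ : NSD (rtd k) j = fun _ => {b : Fin k | j ≤ (b : ℕ)} :=
      funext fun i' => IH (by omega) i'
    have hstep : NSD (rtd k) (j + 1) i
        = {σ ∈ NSD (rtd k) j i | ¬ MMDom (rtd k) i (Opp (NSD (rtd k) j) i) σ} := rfl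
    rw [hstep, hZ]
    ext a
    simp only [Set.mem_setOf_eq]
    constructor
    · rintro ⟨haj, hnd⟩
      by_contra hlt
      have hval : (a : ℕ) = j := by omega
      have haeq : a = ⟨j, by omega⟩ := Fin.ext hval
      exact hnd ⟨⟨j + 1, hjk⟩, haeq ▸ dom_j k j hjk i⟩
    · intro ha
      exact ⟨by omega, nondom k j (by omega) a ha i⟩

lemma stab (k : ℕ) (hk : 2 ≤ k) :
    ∀ m : ℕ, k - 1 ≤ m → ∀ i : Fin 2,
      NSD (rtd k) m i = {a : Fin k | (a : ℕ) = k - 1} := by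
  intro m hm
  induction m, hm using Nat.le_induction with
  | base =>
    intro i
    rw [main1 k hk (k - 1) le_rfl i]
    ext a
    simp only [Set.mem_setOf_eq]
    have := a.isLt
    omega
  | succ m hm IH =>
    intro i
    have hZ : NSD (rtd k) m = fun _ => {b : Fin k | (b : ℕ) = k - 1} :=
      funext fun i' => IH i'
    have hstep : NSD (rtd k) (m + 1) i
        = {σ ∈ NSD (rtd k) m i | ¬ MMDom (rtd k) i (Opp (NSD (rtd k) m) i) σ} := rfl
    rw [hstep, hZ]
    ext a
    simp only [Set.mem_setOf_eq]
    constructor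
    · rintro ⟨ha, _⟩; exact ha
    · intro ha
      exact ⟨ha, nondom_top k hk a ha i⟩

end RTDaux

theorem rtd_iterated_deletion (k : ℕ) (hk : 2 ≤ k) :
    (∀ j : ℕ, j ≤ k - 1 → ∀ i : Fin 2,
      NSD (rtd k) j i = {a : Fin k | j ≤ (a : ℕ)}) ∧
    (∀ i : Fin 2, (⋂ m : ℕ, NSD (rtd k) m i) = {a : Fin k | (a : ℕ) = k - 1}) := by
  refine ⟨RTDaux.main1 k hk, fun i => ?_⟩
  ext a
  simp only [Set.mem_iInter, Set.mem_setOf_eq]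
  constructor
  · intro h
    have := h (k - 1)
    rwa [RTDaux.stab k hk (k - 1) le_rfl i] at this
  · intro ha m
    rcases le_or_gt m (k - 1) with hm | hm
    · rw [RTDaux.main1 k hk m hm i]
      simp only [Set.mem_setOf_eq]; omega
    · rw [RTDaux.stab k hk m hm.le i]
      exact ha

end
end

section
/- In the two-player reverse traveler's dilemma with k ≥ 3 actions (payoffs u(x,y) = (y + 1/2, y) if x > y, (x, x + 1/2) if y > x, (x,x) if x = y), the profile (2,2) is individually rational but does not survive two rounds of iterated deletion of minimax dominated strategies; hence individually rational profiles need not survive iterated minimax deletion. -/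
open Function

section
variable {ι : Type*} [DecidableEq ι] {S : ι → Type*}

/-- `σ` is individually rational: each player gets at least their maximin value. -/
noncomputable def IRprof {ι : Type*} [DecidableEq ι] {S : ι → Type*}
    (u : ι → (∀ j, S j) → ℝ) (σ : ∀ j, S j) : Prop :=
  ∀ i, u i σ ≥ sSup (Set.range fun σ' : S i =>
    minv u i (Opp (fun j => (Set.univ : Set (S j))) i) σ')

-- my helpers
noncomputable def pay (k : ℕ) (a b : Fin k) : ℝ :=
  if (a:ℕ) + 1 > (b:ℕ) + 1 then (((b:ℕ) + 1 : ℕ) : ℝ) + 1/2 else (((a:ℕ) + 1 : ℕ) : ℝ)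

lemma pay_eq_min {k : ℕ} (a b : Fin k) :
    pay k a b = min (((a:ℕ):ℝ) + 1) (((b:ℕ):ℝ) + 1 + 1/2) := by
  unfold pay
  split_ifs with h
  · have : ((b:ℕ):ℝ) + 1 ≤ ((a:ℕ):ℝ) := by exact_mod_cast Nat.lt_iff_add_one_le.mp (by omega)
    push_cast
    rw [min_eq_right (by linarith)]
  · have : ((a:ℕ):ℝ) ≤ ((b:ℕ):ℝ) := by exact_mod_cast (by omega : (a:ℕ) ≤ (b:ℕ))
    push_cast
    rw [min_eq_left (by linarith)]

lemma fin2_ne (i : Fin 2) : i + 1 ≠ i := by revert i; decide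

lemma fin2_eq {i j : Fin 2} (h : j ≠ i) : j = i + 1 := by revert h; revert i j; decide

lemma upd_eq {k : ℕ} (i : Fin 2) (σ : Fin k) :
    (fun τ : Fin 2 → Fin k => rtd k i (Function.update τ i σ)) =
      fun τ => pay k σ (τ (i+1)) := by
  funext τ
  simp only [rtd, pay, Function.update_self, Function.update_of_ne (fin2_ne i)]

lemma minv_le {k : ℕ} {i : Fin 2} {T : Set (Fin 2 → Fin k)} {σ : Fin k} {τ : Fin 2 → Fin k}
    (hτ : τ ∈ T) : minv (rtd k) i T σ ≤ pay k σ (τ (i+1)) := by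
  unfold minv; rw [upd_eq]
  exact csInf_le ((Set.toFinite T).image _).bddBelow ⟨τ, hτ, rfl⟩

lemma le_minv {k : ℕ} {i : Fin 2} {T : Set (Fin 2 → Fin k)} {σ : Fin k} {m : ℝ}
    (hne : T.Nonempty) (h : ∀ τ ∈ T, m ≤ pay k σ (τ (i+1))) : m ≤ minv (rtd k) i T σ := by
  unfold minv; rw [upd_eq]
  exact le_csInf (hne.image _) (by rintro x ⟨τ, hτ, rfl⟩; exact h τ hτ)

lemma le_maxv {k : ℕ} {i : Fin 2} {T : Set (Fin 2 → Fin k)} {σ : Fin k} {τ : Fin 2 → Fin k}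
    (hτ : τ ∈ T) : pay k σ (τ (i+1)) ≤ maxv (rtd k) i T σ := by
  unfold maxv; rw [upd_eq]
  exact le_csSup ((Set.toFinite T).image _).bddAbove ⟨τ, hτ, rfl⟩

lemma maxv_le {k : ℕ} {i : Fin 2} {T : Set (Fin 2 → Fin k)} {σ : Fin k} {m : ℝ}
    (hne : T.Nonempty) (h : ∀ τ ∈ T, pay k σ (τ (i+1)) ≤ m) : maxv (rtd k) i T σ ≤ m := by
  unfold maxv; rw [upd_eq]
  exact csSup_le (hne.image _) (by rintro x ⟨τ, hτ, rfl⟩; exact h τ hτ)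

lemma const_mem_Opp {k : ℕ} {Z : ∀ _ : Fin 2, Set (Fin k)} {i : Fin 2} {b : Fin k}
    (hb : b ∈ Z (i+1)) : (fun _ => b) ∈ Opp Z i := fun j hj => by rw [fin2_eq hj]; exact hb

lemma NSD_zero {k : ℕ} (j : Fin 2) : NSD (rtd k) 0 j = Set.univ := rfl


section main
variable {k : ℕ} (hk : 3 ≤ k)

include hk in
lemma ne0_of_mem_NSD1 (j : Fin 2) (b : Fin k) (hb : b ∈ NSD (rtd k) 1 j) : (b:ℕ) ≠ 0 := by
  intro hb0
  have hOppAll : ∀ τ : Fin 2 → Fin k, τ ∈ Opp (NSD (rtd k) 0) j :=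
    fun τ j' _ => Set.mem_univ (τ j') -- NSD 0 = univ defeq?
  refine hb.2 ⟨⟨1, lt_of_lt_of_le (by norm_num) hk⟩, ?_⟩
  have h1 : (3:ℝ)/2 ≤ minv (rtd k) j (Opp (NSD (rtd k) 0) j) ⟨1, lt_of_lt_of_le (by norm_num) hk⟩ := by
    refine le_minv ⟨fun _ => b, hOppAll _⟩ ?_
    intro τ _
    rw [pay_eq_min]
    simp only [Fin.val_mk]
    push_cast
    have := (τ (j+1)).2
    refine le_min (by norm_num) ?_
    have : (0:ℝ) ≤ ((τ (j+1) : ℕ) : ℝ) := by positivity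
    linarith
  have h2 : maxv (rtd k) j (Opp (NSD (rtd k) 0) j) b ≤ 1 := by
    refine maxv_le ⟨fun _ => b, hOppAll _⟩ ?_
    intro τ _
    rw [pay_eq_min, hb0]
    exact (min_le_left _ _).trans (by norm_num)
  exact lt_of_le_of_lt h2 (lt_of_lt_of_le (by norm_num) h1)

include hk in
lemma mem2_NSD1 (j : Fin 2) : (⟨2, by omega⟩ : Fin k) ∈ NSD (rtd k) 1 j := by
  refine ⟨Set.mem_univ _, ?_⟩
  rintro ⟨σ', hd⟩
  have hOppAll : ∀ τ : Fin 2 → Fin k, τ ∈ Opp (NSD (rtd k) 0) j :=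
    fun τ j' _ => Set.mem_univ (τ j')
  have h1 : minv (rtd k) j (Opp (NSD (rtd k) 0) j) σ' ≤ 3/2 := by
    refine (minv_le (τ := fun _ => (⟨0, by omega⟩ : Fin k)) (hOppAll _)).trans ?_
    rw [pay_eq_min]
    exact (min_le_right _ _).trans (by norm_num)
  have h2 : (3:ℝ) ≤ maxv (rtd k) j (Opp (NSD (rtd k) 0) j) ⟨2, by omega⟩ := by
    refine le_trans ?_ (le_maxv (τ := fun _ => (⟨2, by omega⟩ : Fin k)) (hOppAll _))
    rw [pay_eq_min]
    norm_num
  have := hd.trans_le h1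
  linarith

include hk in
theorem rtd_ir_not_surviving_aux :
    IRprof (rtd k) (fun _ => (⟨1, lt_of_lt_of_le (by norm_num) hk⟩ : Fin k)) ∧
    (∀ i : Fin 2, (⟨1, lt_of_lt_of_le (by norm_num) hk⟩ : Fin k) ∉ NSD (rtd k) 2 i) := by
  constructor
  · intro i
    have hval : rtd k i (fun _ => (⟨1, lt_of_lt_of_le (by norm_num) hk⟩ : Fin k)) = 2 := by
      simp [rtd]
    rw [hval]
    refine Real.sSup_le ?_ (by norm_num)
    rintro x ⟨σ', rfl⟩
    refine le_trans (minv_le (τ := fun _ => (⟨0, by omega⟩ : Fin k)) (fun j' hj' => Set.mem_univ _)) ?_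
    rw [pay_eq_min]
    exact (min_le_right _ _).trans (by norm_num)
  · intro i hmem
    refine hmem.2 ⟨⟨2, by omega⟩, ?_⟩
    have hne : (Opp (NSD (rtd k) 1) i).Nonempty :=
      ⟨fun _ => (⟨2, by omega⟩ : Fin k), const_mem_Opp (mem2_NSD1 hk (i+1))⟩
    have hb1 : ∀ τ ∈ Opp (NSD (rtd k) 1) i, 1 ≤ (τ (i+1) : ℕ) := by
      intro τ hτ
      have := ne0_of_mem_NSD1 hk (i+1) (τ (i+1)) (hτ (i+1) (fin2_ne i))
      omega
    have h1 : (5:ℝ)/2 ≤ minv (rtd k) i (Opp (NSD (rtd k) 1) i) ⟨2, by omega⟩ := by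
      refine le_minv hne ?_
      intro τ hτ
      rw [pay_eq_min]
      have h := hb1 τ hτ
      have : (1:ℝ) ≤ ((τ (i+1) : ℕ) : ℝ) := by exact_mod_cast h
      refine le_min (by norm_num) (by linarith)
    have h2 : maxv (rtd k) i (Opp (NSD (rtd k) 1) i) ⟨1, lt_of_lt_of_le (by norm_num) hk⟩ ≤ 2 := by
      refine maxv_le hne ?_
      intro τ _
      rw [pay_eq_min]
      exact (min_le_left _ _).trans (by norm_num)
    exact lt_of_le_of_lt h2 (lt_of_lt_of_le (by norm_num) h1)

end main

theorem rtd_ir_not_surviving (k : ℕ) (hk : 3 ≤ k) :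
    IRprof (rtd k) (fun _ => (⟨1, by omega⟩ : Fin k)) ∧
    (∀ i : Fin 2, (⟨1, by omega⟩ : Fin k) ∉ NSD (rtd k) 2 i) := rtd_ir_not_surviving_aux hk

end
end

section
/- In the 2×2 game with row strategies {a,b}, column strategies {c,d}, and payoffs u(a,c) = (100,0), u(a,d) = (100,0), u(b,c) = (150,0), u(b,d) = (50,0), every strategy profile survives iterated deletion of minimax dominated strategies, but the profile (b,d) is not individually rational. -/
open Function

section
variable {ι : Type*} [DecidableEq ι] {S : ι → Type*}

/-- Row player is `false`, column player `true`; row strategies `a = false`, `b = true`;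
column strategies `c = false`, `d = true`. -/
noncomputable def game11 : Bool → (Bool → Bool) → ℝ := fun i σ =>
  if i then 0
  else if σ false then (if σ true then 50 else 150) else 100


lemma opp_univ11 (i : Bool) :
    Opp (fun _ : Bool => (Set.univ : Set Bool)) i = Set.univ := by
  ext τ; simp [Opp]

lemma img_true11 (σ : Bool) :
    ((fun τ : Bool → Bool => game11 true (Function.update τ true σ)) '' Set.univ) = {(0:ℝ)} := by
  simp [game11]

lemma img_false_a :
    ((fun τ : Bool → Bool => game11 false (Function.update τ false false)) '' Set.univ) = {(100:ℝ)} := by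
  simp [game11]

lemma img_false_b :
    ((fun τ : Bool → Bool => game11 false (Function.update τ false true)) '' Set.univ) = {(50:ℝ), 150} := by
  ext x
  simp only [game11, Set.image_univ, Set.mem_range, Set.mem_insert_iff, Set.mem_singleton_iff]
  constructor
  · rintro ⟨τ, rfl⟩
    cases h : τ true <;> simp [h]
  · rintro (rfl | rfl)
    · exact ⟨fun _ => true, by simp⟩
    · exact ⟨fun _ => false, by simp⟩

lemma minv_true11 (σ : Bool) : minv game11 true Set.univ σ = 0 := by
  rw [minv, img_true11, csInf_singleton]

lemma maxv_true11 (σ : Bool) : maxv game11 true Set.univ σ = 0 := by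
  rw [maxv, img_true11, csSup_singleton]

lemma minv_false_a : minv game11 false Set.univ false = 100 := by
  rw [minv, img_false_a, csInf_singleton]

lemma maxv_false_a : maxv game11 false Set.univ false = 100 := by
  rw [maxv, img_false_a, csSup_singleton]

lemma minv_false_b : minv game11 false Set.univ true = 50 := by
  rw [minv, img_false_b, csInf_pair]; norm_num

lemma maxv_false_b : maxv game11 false Set.univ true = 150 := by
  rw [maxv, img_false_b, csSup_pair]; norm_num

lemma no_mmdom11 (i : Bool) (σ : Bool) : ¬ MMDom game11 i Set.univ σ := by
  rintro ⟨σ', h⟩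
  rw [MMDomBy] at h
  cases i
  · cases σ' <;> cases σ <;>
      simp only [minv_false_a, minv_false_b, maxv_false_a, maxv_false_b] at h <;> norm_num at h
  · rw [minv_true11, maxv_true11] at h; exact lt_irrefl _ h

theorem game11_survives_but_not_ir :
    (∀ (k : ℕ) (i : Bool), NSD game11 k i = Set.univ) ∧
    ¬ IRprof game11 (fun _ => true) := by
  have hNSD : ∀ (k : ℕ) (i : Bool), NSD game11 k i = Set.univ := by
    intro k
    induction k with
    | zero => intro i; rfl
    | succ k ih =>
      intro i
      have hopp : Opp (NSD game11 k) i = Set.univ := by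
        have : NSD game11 k = fun _ : Bool => (Set.univ : Set Bool) := funext ih
        rw [this, opp_univ11]
      ext σ
      simp only [NSD, Set.mem_setOf_eq, ih i, Set.mem_univ, true_and, iff_true, hopp]
      exact no_mmdom11 i σ
  refine ⟨hNSD, ?_⟩
  intro hIR
  have h := hIR false
  rw [opp_univ11] at h
  have hrange : (Set.range fun σ' : Bool => minv game11 false Set.univ σ') = {(100:ℝ), 50} := by
    ext x
    simp only [Set.mem_range, Set.mem_insert_iff, Set.mem_singleton_iff]
    constructor
    · rintro ⟨b, rfl⟩
      cases b
      · left; exact minv_false_a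
      · right; exact minv_false_b
    · rintro (rfl | rfl)
      · exact ⟨false, minv_false_a⟩
      · exact ⟨true, minv_false_b⟩
  rw [hrange, csSup_pair] at h
  have hval : game11 false (fun _ => true) = 50 := by simp [game11]
  rw [hval] at h
  norm_num at h


end
end
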